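/- For v ∈ V, the creation operator c(v) (multiplication by v) and the annihilation operator a(v) (the unique derivation with a(v)1 = 0 and a(v)w = <v|w> for w ∈ V) are mutually adjoint on the symmetric algebra SV: <a(v)φ | ψ> = <φ | c(v)ψ> for all φ, ψ ∈ SV. -/

import Mathlib

open scoped BigOperators ComplexConjugate

/-- The permanent inner product on degree-`d` symmetric tensors. -/
noncomputable def permInner {V : Type*} [NormedAddCommGroup V] [InnerProductSpace ℂ V]
    {d : ℕ} (x y : Fin d → V) : ℂ :=
  ∑ π : Equiv.Perm (Fin d), ∏ k, (inner ℂ (x k) (y (π k)) : ℂ)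

section Aux

variable {V : Type*} [NormedAddCommGroup V] [InnerProductSpace ℂ V]

lemma permInner_left {d : ℕ} (x y : Fin d → V) :
    permInner x y = ∑ π : Equiv.Perm (Fin d), ∏ k, (inner ℂ (x (π k)) (y k) : ℂ) := by
  unfold permInner
  rw [← Equiv.sum_comp (Equiv.inv (Equiv.Perm (Fin d)))
    (fun π => ∏ k, (inner ℂ (x (π k)) (y k) : ℂ))]
  refine Finset.sum_congr rfl fun π _ => ?_
  rw [← Equiv.prod_comp π
    (fun k => (inner ℂ (x ((Equiv.inv (Equiv.Perm (Fin d)) π) k)) (y k) : ℂ))]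
  simp

lemma comb {n : ℕ} (v : V) (x : Fin (n+1) → V) (y : Fin n → V) :
    ∑ i : Fin (n+1), (inner ℂ (x i) v : ℂ) *
      permInner (fun k => x (Equiv.swap 0 i k.succ)) y = permInner x (Fin.cons v y) := by
  rw [permInner_left]
  rw [← Equiv.sum_comp (Equiv.Perm.decomposeFin (n := n)).symm]
  rw [Fintype.sum_prod_type]
  refine Finset.sum_congr rfl fun i _ => ?_
  rw [permInner_left, Finset.mul_sum]
  refine Finset.sum_congr rfl fun σ _ => ?_
  rw [Fin.prod_univ_succ]
  simp

lemma prod_erase_eq {A : Type*} [CommRing A] {n : ℕ} (g : Fin (n+1) → A) (i : Fin (n+1)) :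
    ∏ j ∈ Finset.univ.erase i, g j = ∏ k : Fin n, g (Equiv.swap 0 i k.succ) := by
  classical
  have hinj : Function.Injective (fun k : Fin n => Equiv.swap 0 i k.succ) :=
    (Equiv.injective _).comp (Fin.succ_injective n)
  have himg : Finset.image (fun k : Fin n => Equiv.swap 0 i k.succ) Finset.univ
      = Finset.univ.erase i := by
    apply Finset.eq_of_subset_of_card_le
    · intro j hj
      simp only [Finset.mem_image, Finset.mem_univ, true_and] at hj
      obtain ⟨k, rfl⟩ := hj
      refine Finset.mem_erase.mpr ⟨?_, Finset.mem_univ _⟩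
      intro h
      have : k.succ = (0 : Fin (n+1)) := by
        have := congrArg (Equiv.swap (0 : Fin (n+1)) i) h
        simpa using this
      exact Fin.succ_ne_zero k this
    · rw [Finset.card_erase_of_mem (Finset.mem_univ _), Finset.card_image_of_injective _ hinj]
      simp
  rw [← himg, Finset.prod_image (fun a _ b _ h => hinj h)]

lemma der_prod {A : Type*} [CommRing A] [Algebra ℂ A] (D : A →ₗ[ℂ] A)
    (hD : ∀ p q : A, D (p * q) = D p * q + p * D q) {κ : Type*} [DecidableEq κ]
    (s : Finset κ) (f : κ → A) :
    D (∏ i ∈ s, f i) = ∑ i ∈ s, D (f i) * ∏ j ∈ s.erase i, f j := by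
  classical
  induction s using Finset.induction_on with
  | empty =>
    have h1 : D 1 = 0 := by
      have := hD 1 1
      simp only [mul_one, one_mul] at this
      have h2 : D 1 + D 1 = D 1 + 0 := by rw [add_zero, ← this]
      exact (add_left_cancel h2)
    simp [h1]
  | insert i s hni ih =>
    rw [Finset.prod_insert hni, hD, ih, Finset.sum_insert hni, Finset.erase_insert hni,
      Finset.mul_sum]
    congr 1
    refine Finset.sum_congr rfl fun j hj => ?_
    rw [Finset.erase_insert_of_ne (by rintro rfl; exact hni hj),
      Finset.prod_insert (fun h => hni (Finset.mem_of_mem_erase h)), mul_left_comm]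

end Aux

/-- Mutual adjointness of creators and annihilators on the symmetric algebra.  The symmetric
algebra `SV` is modelled by a commutative ℂ-algebra `A` generated by the image of a linear map
`ι : V →ₗ[ℂ] A`, equipped with the sesquilinear permanent inner product `B` (homogeneous
components of different degrees being orthogonal).  The creator `c(v)` is multiplication by
`ι v`, and `a v` is the derivation with `a v 1 = 0` and `a v (ι w) = ⟨v|w⟩·1`.  Then for all
`φ, ψ ∈ SV`:  `⟨a(v)φ | ψ⟩ = ⟨φ | c(v)ψ⟩`. -/
theorem stmt5 {V : Type*} [NormedAddCommGroup V] [InnerProductSpace ℂ V]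
    {A : Type*} [CommRing A] [Algebra ℂ A] (ι : V →ₗ[ℂ] A)
    (hgen : Algebra.adjoin ℂ (Set.range ι) = ⊤)
    (B : A →ₗ⋆[ℂ] A →ₗ[ℂ] ℂ)
    (hBperm : ∀ {d : ℕ} (x y : Fin d → V),
      B (∏ i, ι (x i)) (∏ i, ι (y i)) = permInner x y)
    (hBorth : ∀ {d e : ℕ}, d ≠ e → ∀ (x : Fin d → V) (y : Fin e → V),
      B (∏ i, ι (x i)) (∏ i, ι (y i)) = 0)
    (a : V → A →ₗ[ℂ] A)
    (ha1 : ∀ v, a v 1 = 0)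
    (haι : ∀ v w, a v (ι w) = (inner ℂ v w : ℂ) • (1 : A))
    (haDer : ∀ v p q, a v (p * q) = a v p * q + p * a v q) :
    ∀ (v : V) (φ ψ : A), B (a v φ) ψ = B φ (ι v * ψ) := by
  classical
  intro v φ ψ
  -- the set of monomials
  set S : Set A := {z | ∃ (d : ℕ) (x : Fin d → V), z = ∏ i, ι (x i)} with hS
  have hmono : ∀ (d : ℕ) (x : Fin d → V), (∏ i, ι (x i)) ∈ S := fun d x => ⟨d, x, rfl⟩
  have hspan : Submodule.span ℂ S = ⊤ := by
    have hmul : ∀ p ∈ Submodule.span ℂ S, ∀ q ∈ Submodule.span ℂ S,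
        p * q ∈ Submodule.span ℂ S := by
      intro p hp q hq
      induction hp, hq using Submodule.span_induction₂ with
      | mem_mem p q hp hq =>
        obtain ⟨d, x, rfl⟩ := hp
        obtain ⟨e, y, rfl⟩ := hq
        refine Submodule.subset_span ⟨d + e, Fin.append x y, ?_⟩
        rw [Fin.prod_univ_add]
        simp
      | zero_left q hq => simp
      | zero_right p hp => simp
      | add_left p q r hp hq hr h1 h2 => rw [add_mul]; exact Submodule.add_mem _ h1 h2
      | add_right p q r hp hq hr h1 h2 => rw [mul_add]; exact Submodule.add_mem _ h1 h2
      | smul_left c p q hp hq h => rw [smul_mul_assoc]; exact Submodule.smul_mem _ _ h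
      | smul_right c p q hp hq h => rw [mul_smul_comm]; exact Submodule.smul_mem _ _ h
    rw [eq_top_iff]
    intro z hz0
    clear hz0
    have hz : z ∈ Algebra.adjoin ℂ (Set.range ι) := by rw [hgen]; trivial
    induction hz using Algebra.adjoin_induction with
    | mem w hw =>
      obtain ⟨w, rfl⟩ := hw
      refine Submodule.subset_span ⟨1, fun _ => w, ?_⟩
      simp
    | algebraMap c =>
      rw [Algebra.algebraMap_eq_smul_one]
      exact Submodule.smul_mem _ _ (Submodule.subset_span ⟨0, fun i => i.elim0, by simp⟩)
    | add p q hp hq h1 h2 => exact Submodule.add_mem _ h1 h2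
    | mul p q hp hq h1 h2 => exact hmul _ h1 _ h2
  -- the key monomial computation
  have key : ∀ (d e : ℕ) (x : Fin d → V) (y : Fin e → V),
      B (a v (∏ i, ι (x i))) (∏ i, ι (y i)) = B (∏ i, ι (x i)) (ι v * ∏ i, ι (y i)) := by
    intro d e x y
    have hcons : ι v * ∏ i, ι (y i) = ∏ i : Fin (e+1), ι (Fin.cons (α := fun _ => V) v y i) := by
      rw [Fin.prod_univ_succ]; simp
    match d with
    | 0 =>
      have h0 : (∏ i : Fin 0, ι (x i)) = 1 := by simp
      rw [h0, ha1, map_zero, LinearMap.zero_apply, hcons]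
      exact (hBorth (by omega) x (Fin.cons v y)).symm
    | Nat.succ n =>
      have hexp : a v (∏ i : Fin (n+1), ι (x i))
          = ∑ i : Fin (n+1), (inner ℂ v (x i) : ℂ) •
              ∏ k : Fin n, ι (x (Equiv.swap 0 i k.succ)) := by
        rw [der_prod (a v) (haDer v)]
        refine Finset.sum_congr rfl fun i _ => ?_
        rw [haι, prod_erase_eq, smul_mul_assoc, one_mul]
      rw [hexp, map_sum, hcons, LinearMap.sum_apply]
      simp only [LinearMap.map_smulₛₗ, LinearMap.smul_apply, starRingEnd_apply]
      by_cases hne : n = e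
      · subst hne
        rw [hBperm]
        rw [← comb v x y]
        refine Finset.sum_congr rfl fun i _ => ?_
        rw [hBperm, smul_eq_mul, ← starRingEnd_apply, inner_conj_symm]
      · rw [hBorth (by omega) x (Fin.cons v y)]
        refine Finset.sum_eq_zero fun i _ => ?_
        rw [hBorth hne, smul_zero]
  -- extend by linearity in φ for monomial ψ
  have h1 : ∀ (e : ℕ) (y : Fin e → V) (φ' : A),
      B (a v φ') (∏ i, ι (y i)) = B φ' (ι v * ∏ i, ι (y i)) := by
    intro e y φ'
    have hφ : φ' ∈ Submodule.span ℂ S := by rw [hspan]; trivial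
    induction hφ using Submodule.span_induction with
    | mem z hz =>
      obtain ⟨d, x, rfl⟩ := hz
      exact key d e x y
    | zero => simp
    | add p q hp hq hp' hq' => simp [map_add, hp', hq']
    | smul c p hp hp' => simp [map_smul, LinearMap.map_smulₛₗ, hp']
  -- extend by linearity in ψ
  have hψ : ψ ∈ Submodule.span ℂ S := by rw [hspan]; trivial
  induction hψ using Submodule.span_induction with
  | mem z hz =>
    obtain ⟨e, y, rfl⟩ := hz
    exact h1 e y φ
  | zero => simp
  | add p q hp hq hp' hq' => simp [map_add, mul_add, hp', hq']
  | smul c p hp hp' => simp [map_smul, mul_smul_comm, hp']
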